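/- Let Δ be the Laplacian on the discrete circle S = ℤ/nℤ (n ≥ 3), with graph metric d_G, graph diameter D_G = ⌊n/2⌋. For the metric d(x,y) = sin(d_G(x,y)π/n), there exists a coupling generator Δ^π of Δ such that Δ^π d(x,y) ≤ -(1 - cos(2π/n)) d(x,y) for all x ≠ y; consequently W₁-exponential contraction holds with rate λ₁ = 1 - cos(2π/n), the spectral gap of Δ. -/

import Mathlib

/-- A coupling of two nonnegative measures (densities) with prescribed marginals. -/
def IsCoupling {S : Type*} (p q : S → ℝ) (π : S × S → ℝ) : Prop :=
  (∀ z, 0 ≤ π z) ∧ Summable π ∧ (∀ x, ∑' y, π (x, y) = p x) ∧ (∀ y, ∑' x, π (x, y) = q y)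

/-- Optimal transport cost. -/
noncomputable def Tcost {S : Type*} (c : S → S → ℝ) (p q : S → ℝ) : ℝ :=
  sInf {r : ℝ | ∃ π, IsCoupling p q π ∧ r = ∑' z : S × S, c z.1 z.2 * π z}

/-- A coupling jump-rate kernel of a single jump kernel `J`. -/
def IsCouplingKernel {S : Type*} (J : S → S → ℝ) (Jπ : S × S → S × S → ℝ) : Prop :=
  (∀ z w, 0 ≤ Jπ z w) ∧
  (∀ x y x', x' ≠ x → ∑' y', Jπ (x, y) (x', y') = J x x') ∧
  (∀ x y y', y' ≠ y → ∑' x', Jπ (x, y) (x', y') = J y y') ∧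
  (∀ x w, w.1 ≠ w.2 → Jπ (x, x) w = 0)

set_option linter.unusedSectionVars false
set_option linter.unusedVariables false
set_option maxHeartbeats 1000000

open NormedSpace Matrix

namespace Aux13

variable {ι : Type*} [Fintype ι] [DecidableEq ι]

attribute [local instance] Matrix.linftyOpNormedAddCommGroup Matrix.linftyOpNormedSpace
  Matrix.linftyOpNormedRing Matrix.linftyOpNormedAlgebra

lemma smul_one_diag (c : ℝ) : (c • (1 : Matrix ι ι ℝ)) = Matrix.diagonal (fun _ => c) := by
  ext i j
  by_cases h : i = j <;> simp [Matrix.one_apply, Matrix.diagonal_apply, h]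

lemma exp_smul_one (c : ℝ) : exp (c • (1 : Matrix ι ι ℝ)) = Real.exp c • 1 := by
  rw [smul_one_diag, Matrix.exp_diagonal, smul_one_diag]
  rw [Pi.exp_def]
  funext i
  simp [← Real.exp_eq_exp_ℝ]

lemma pow_entry_nonneg {M : Matrix ι ι ℝ} (h : ∀ i j, 0 ≤ M i j) :
    ∀ (k : ℕ) (i j : ι), 0 ≤ (M ^ k) i j := by
  intro k
  induction k with
  | zero => intro i j; by_cases hij : i = j <;> simp [Matrix.one_apply, hij]
  | succ k ih =>
    intro i j
    rw [pow_succ, Matrix.mul_apply]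
    exact Finset.sum_nonneg fun w _ => mul_nonneg (ih i w) (h w j)

lemma entry_exp_nonneg {M : Matrix ι ι ℝ} (h : ∀ i j, 0 ≤ M i j) (i j : ι) :
    0 ≤ exp M i j := by
  rw [exp_eq_tsum ℝ]
  dsimp only
  have hs : Summable fun k : ℕ => ((k.factorial : ℝ))⁻¹ • M ^ k :=
    NormedSpace.expSeries_summable' M
  erw [tsum_apply hs, tsum_apply (Pi.summable.mp hs i)]
  refine tsum_nonneg fun k => ?_
  have h2 := pow_entry_nonneg h k i j
  simp only [Matrix.smul_apply, smul_eq_mul]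
  positivity

lemma exp_offdiag_nonneg {M : Matrix ι ι ℝ} (h : ∀ i j, i ≠ j → 0 ≤ M i j) {t : ℝ}
    (ht : 0 ≤ t) (i j : ι) : 0 ≤ exp (t • M) i j := by
  set c : ℝ := ∑ k, |M k k| with hc
  have hcn : ∀ i₀ : ι, 0 ≤ M i₀ i₀ + c := by
    intro i₀
    have h1 : |M i₀ i₀| ≤ c :=
      Finset.single_le_sum (f := fun k => |M k k|) (fun k _ => abs_nonneg _) (Finset.mem_univ i₀)
    have h2 := neg_abs_le (M i₀ i₀)
    linarith
  have hN : ∀ i₀ j₀ : ι, 0 ≤ (t • (M + c • 1)) i₀ j₀ := by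
    intro i₀ j₀
    by_cases hij : i₀ = j₀
    · subst hij
      simp only [Matrix.smul_apply, Matrix.add_apply, Matrix.one_apply_eq, smul_eq_mul]
      have := hcn i₀
      nlinarith
    · simp only [Matrix.smul_apply, Matrix.add_apply, Matrix.one_apply_ne hij, smul_eq_mul]
      have := h i₀ j₀ hij
      nlinarith
  have key : t • M = t • (M + c • 1) + (-(t * c)) • (1 : Matrix ι ι ℝ) := by
    rw [smul_add, smul_smul]
    module
  erw [key, exp_add_of_commute ((Commute.one_right (t • (M + c • 1))).smul_right (-(t * c))),
    exp_smul_one, mul_smul_comm, mul_one, Matrix.smul_apply, smul_eq_mul]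
  exact mul_nonneg (Real.exp_nonneg _) (entry_exp_nonneg hN i j)

lemma exp_intertwine {κ' : Type*} [Fintype κ'] [DecidableEq κ'] (M : Matrix ι ι ℝ)
    (Dm : Matrix κ' κ' ℝ) (A : Matrix ι κ' ℝ) (h : M * A = A * Dm) (t : ℝ) :
    exp (t • M) * A = A * exp (t • Dm) := by
  have h' : (t • M) * A = A * (t • Dm) := by
    rw [Matrix.smul_mul, h, Matrix.mul_smul]
  have hpow : ∀ k : ℕ, (t • M) ^ k * A = A * (t • Dm) ^ k := by
    intro k; induction k with
    | zero => simp
    | succ k ih => rw [pow_succ, pow_succ, Matrix.mul_assoc, h', ← Matrix.mul_assoc, ih,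
        Matrix.mul_assoc]
  have hsM : Summable (fun k : ℕ => ((k.factorial : ℝ))⁻¹ • (t • M) ^ k) :=
    NormedSpace.expSeries_summable' _
  have hsD : Summable (fun k : ℕ => ((k.factorial : ℝ))⁻¹ • (t • Dm) ^ k) :=
    NormedSpace.expSeries_summable' _
  let R : Matrix ι ι ℝ →ₗ[ℝ] Matrix ι κ' ℝ :=
    { toFun := fun X => X * A
      map_add' := fun X Y => Matrix.add_mul X Y A
      map_smul' := fun c X => Matrix.smul_mul c X A }
  let Lm : Matrix κ' κ' ℝ →ₗ[ℝ] Matrix ι κ' ℝ :=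
    { toFun := fun X => A * X
      map_add' := fun X Y => Matrix.mul_add A X Y
      map_smul' := fun c X => Matrix.mul_smul A c X }
  have hR : exp (t • M) * A = R.toContinuousLinearMap (exp (t • M)) := rfl
  have hL : A * exp (t • Dm) = Lm.toContinuousLinearMap (exp (t • Dm)) := rfl
  rw [hR, hL, exp_eq_tsum ℝ, exp_eq_tsum ℝ, ContinuousLinearMap.map_tsum _ hsM,
    ContinuousLinearMap.map_tsum _ hsD]
  congr 1
  funext k
  show ((k.factorial : ℝ))⁻¹ • (t • M) ^ k * A = A * (((k.factorial : ℝ))⁻¹ • (t • Dm) ^ k)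
  rw [Matrix.smul_mul, hpow k, Matrix.mul_smul]

lemma exp_mulVec_le (B : Matrix ι ι ℝ) (hB : ∀ i j, i ≠ j → 0 ≤ B i j) (V : ι → ℝ)
    (hV : ∀ i, B.mulVec V i ≤ 0) {t : ℝ} (ht : 0 ≤ t) (i : ι) :
    (exp (t • B)).mulVec V i ≤ V i := by
  let g : Matrix ι ι ℝ →ₗ[ℝ] ℝ :=
    { toFun := fun X => X.mulVec V i
      map_add' := fun X Y => by simp [Matrix.add_mulVec]
      map_smul' := fun c X => by simp [Matrix.smul_mulVec] }
  let G := g.toContinuousLinearMap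
  have hGapp : ∀ X : Matrix ι ι ℝ, G X = X.mulVec V i := fun X => rfl
  have hder : ∀ s : ℝ, HasDerivAt (fun u : ℝ => G (exp (u • B))) (G (exp (s • B) * B)) s :=
    fun s => (G.hasFDerivAt.comp_hasDerivAt s (hasDerivAt_exp_smul_const B s))
  have hdiff : Differentiable ℝ (fun u : ℝ => G (exp (u • B))) :=
    fun s => (hder s).differentiableAt
  have hanti : AntitoneOn (fun u : ℝ => G (exp (u • B))) (Set.Icc 0 t) := by
    apply antitoneOn_of_deriv_nonpos (convex_Icc 0 t) hdiff.continuous.continuousOn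
      (hdiff.differentiableOn)
    intro s hs
    rw [(hder s).deriv, hGapp, ← Matrix.mulVec_mulVec]
    have hs0 : (0:ℝ) ≤ s := by
      have := (interior_subset (s := Set.Icc (0:ℝ) t)) hs
      exact this.1
    show (exp (s • B) *ᵥ (B *ᵥ V)) i ≤ 0
    rw [Matrix.mulVec, dotProduct]
    refine Finset.sum_nonpos fun w _ => ?_
    have h1 : 0 ≤ exp (s • B) i w := exp_offdiag_nonneg hB hs0 i w
    have h2 := hV w
    nlinarith
  have hfin := hanti (Set.left_mem_Icc.mpr ht) (Set.right_mem_Icc.mpr ht) ht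
  have h0 : G (exp ((0:ℝ) • B)) = V i := by
    rw [zero_smul, exp_zero, hGapp, Matrix.one_mulVec]
  simp only at hfin
  rw [h0] at hfin
  exact le_trans (le_of_eq (hGapp _).symm) hfin



/-! ### ZMod and trig helpers -/

noncomputable def gf (n : ℕ) (δ : ZMod n) : ℝ := Real.sin ((δ.val : ℝ) * Real.pi / n)

variable {n : ℕ} [NeZero n]

lemma npos (hn : 3 ≤ n) : (0:ℝ) < n := by positivity

lemma cast_ne_zero' (k : ℕ) (h1 : 0 < k) (h2 : k < n) : (k : ZMod n) ≠ 0 := by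
  intro h
  have := ZMod.val_cast_of_lt h2
  rw [h, ZMod.val_zero] at this
  omega

lemma add_nat_ne (a : ZMod n) (k : ℕ) (h1 : 0 < k) (h2 : k < n) : a + (k : ZMod n) ≠ a := by
  intro h
  exact cast_ne_zero' k h1 h2 (add_eq_left.mp h)

lemma one_lt' (hn : 3 ≤ n) : Fact (1 < n) := ⟨by omega⟩

lemma add_one_ne (hn : 3 ≤ n) (a : ZMod n) : a + 1 ≠ a := by
  have := add_nat_ne a 1 (by omega) (by omega)
  simpa using this

lemma sub_one_ne (hn : 3 ≤ n) (a : ZMod n) : a - 1 ≠ a := by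
  intro h
  have h1 : (1 : ZMod n) = 0 := sub_eq_self.mp h
  have h2 := cast_ne_zero' (n := n) 1 one_pos (by omega)
  rw [Nat.cast_one] at h2
  exact h2 h1

lemma two_ne_zero' (hn : 3 ≤ n) : (2 : ZMod n) ≠ 0 := by
  have h2 := cast_ne_zero' (n := n) 2 (by omega) (by omega)
  rwa [Nat.cast_ofNat] at h2

lemma add_one_ne_sub_one (hn : 3 ≤ n) (a : ZMod n) : a + 1 ≠ a - 1 := by
  intro h
  exact two_ne_zero' hn (by linear_combination h)

lemma sub_one_ne_add_one (hn : 3 ≤ n) (a : ZMod n) : a - 1 ≠ a + 1 :=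
  fun h => add_one_ne_sub_one hn a h.symm

lemma gf_zero : gf n 0 = 0 := by simp [gf]

lemma gf_nonneg (hn : 3 ≤ n) (δ : ZMod n) : 0 ≤ gf n δ := by
  have hπ := Real.pi_pos
  have hn0 := npos (n := n) hn
  apply Real.sin_nonneg_of_nonneg_of_le_pi
  · positivity
  · have hv : (δ.val : ℝ) ≤ n := by exact_mod_cast (ZMod.val_lt δ).le
    rw [div_le_iff₀ hn0]
    nlinarith

lemma gf_neg (hn : 3 ≤ n) (δ : ZMod n) : gf n (-δ) = gf n δ := by
  by_cases h : δ = 0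
  · simp [h]
  · have hv : (-δ).val = n - δ.val := by rw [ZMod.neg_val, if_neg h]
    have hlt : δ.val < n := ZMod.val_lt δ
    have h0 : δ.val ≠ 0 := fun hh => h ((ZMod.val_eq_zero δ).mp hh)
    unfold gf
    rw [hv]
    have hcast : ((n - δ.val : ℕ) : ℝ) = (n : ℝ) - δ.val := by
      push_cast [Nat.cast_sub hlt.le]
      ring
    rw [hcast]
    have hn0 : (n:ℝ) ≠ 0 := ne_of_gt (npos hn)
    have harg : ((n : ℝ) - δ.val) * Real.pi / n = Real.pi - (δ.val : ℝ) * Real.pi / n := by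
      field_simp
    rw [harg, Real.sin_pi_sub]

lemma d_eq_gf (hn : 3 ≤ n) (x y : ZMod n) :
    Real.sin (((min (x - y).val (y - x).val : ℕ) : ℝ) * Real.pi / n) = gf n (x - y) := by
  rcases le_total ((x - y).val) ((y - x).val) with h | h
  · rw [min_eq_left h]; rfl
  · rw [min_eq_right h]
    have hxy : y - x = -(x - y) := by ring
    rw [← gf_neg hn (x - y), ← hxy]; rfl

lemma gf_one (hn : 3 ≤ n) : gf n 1 = Real.sin (Real.pi / n) := by
  unfold gf
  have : (1 : ZMod n).val = 1 := by
    have : ((1:ℕ) : ZMod n).val = 1 := ZMod.val_cast_of_lt (by omega)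
    simpa using this
  rw [this]
  norm_num

lemma gf_three (hn : 3 ≤ n) : gf n 3 = Real.sin (3 * Real.pi / n) := by
  unfold gf
  rcases eq_or_lt_of_le hn with h3 | h4
  · subst h3
    have h1 : (3 : ZMod 3) = 0 := by decide
    rw [h1, ZMod.val_zero]
    have : 3 * Real.pi / 3 = Real.pi := by field_simp
    simp [this]
  · have h2 : (3 : ZMod n) = ((3:ℕ) : ZMod n) := by norm_cast
    rw [h2, ZMod.val_cast_of_lt (by omega)]
    norm_num

lemma val_bounds (hn : 3 ≤ n) {δ : ZMod n} (h0 : δ ≠ 0) (h1 : δ ≠ 1) (hm : δ ≠ -1) :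
    2 ≤ δ.val ∧ δ.val ≤ n - 2 := by
  have hvlt := ZMod.val_lt δ
  have hself : ((δ.val : ℕ) : ZMod n) = δ := ZMod.natCast_zmod_val δ
  have hv0 : δ.val ≠ 0 := fun hh => h0 ((ZMod.val_eq_zero δ).mp hh)
  have hv1 : δ.val ≠ 1 := by
    intro hh
    apply h1
    rw [← hself, hh]
    norm_cast
  have hvn : δ.val ≠ n - 1 := by
    intro hh
    apply hm
    rw [← hself, hh]
    push_cast [Nat.cast_sub (by omega : 1 ≤ n), ZMod.natCast_self]
    ring
  omega

lemma sin_shift (u w : ℝ) : Real.sin (u + w) + Real.sin (u - w) = 2 * Real.cos w * Real.sin u := by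
  rw [Real.sin_add, Real.sin_sub]; ring

lemma gf_far (hn : 3 ≤ n) {δ : ZMod n} (h0 : δ ≠ 0) (h1 : δ ≠ 1) (hm : δ ≠ -1) :
    gf n (δ + 2) + gf n (δ - 2) = 2 * Real.cos (2 * Real.pi / n) * gf n δ := by
  obtain ⟨hlo, hhi⟩ := val_bounds hn h0 h1 hm
  have hself : ((δ.val : ℕ) : ZMod n) = δ := ZMod.natCast_zmod_val δ
  set v : ℕ := δ.val with hv
  -- g (δ+2)
  have hp : gf n (δ + 2) = Real.sin (((v:ℝ) + 2) * Real.pi / n) := by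
    have hcast : δ + 2 = ((v + 2 : ℕ) : ZMod n) := by
      push_cast [hself]; ring
    rcases lt_or_eq_of_le (by omega : v + 2 ≤ n) with hlt | heq
    · rw [hcast]
      unfold gf
      rw [ZMod.val_cast_of_lt hlt]
      push_cast
      ring_nf
    · have : δ + 2 = 0 := by
        rw [hcast, heq, ZMod.natCast_self]
      rw [this, gf_zero]
      have harg : ((v:ℝ) + 2) * Real.pi / n = Real.pi := by
        have : ((v:ℝ) + 2) = n := by
          have : ((v + 2 : ℕ) : ℝ) = ((n:ℕ):ℝ) := by rw [heq]
          push_cast at this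
          linarith
        rw [this]
        field_simp
      rw [harg, Real.sin_pi]
  -- g (δ-2)
  have hm2 : gf n (δ - 2) = Real.sin (((v:ℝ) - 2) * Real.pi / n) := by
    have hcast : δ - 2 = ((v - 2 : ℕ) : ZMod n) := by
      push_cast [hself, Nat.cast_sub hlo]
      ring
    rw [hcast]
    unfold gf
    rw [ZMod.val_cast_of_lt (by omega)]
    push_cast [Nat.cast_sub hlo]
    ring_nf
  rw [hp, hm2]
  have e1 : ((v:ℝ) + 2) * Real.pi / n = (v:ℝ) * Real.pi / n + 2 * Real.pi / n := by ring
  have e2 : ((v:ℝ) - 2) * Real.pi / n = (v:ℝ) * Real.pi / n - 2 * Real.pi / n := by ring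
  rw [e1, e2, sin_shift]
  rfl

lemma nb_real (hn : 3 ≤ n) :
    (1/2) * Real.sin (3 * Real.pi / n)
      = (3/2 - (1 - Real.cos (2 * Real.pi / n))) * Real.sin (Real.pi / n) := by
  have h3 : 3 * Real.pi / n = 3 * (Real.pi / n) := by ring
  have h2 : 2 * Real.pi / n = 2 * (Real.pi / n) := by ring
  rw [h3, h2, Real.sin_three_mul, Real.cos_two_mul]
  have hpy := Real.sin_sq_add_cos_sq (Real.pi / n)
  linear_combination (-2 * Real.sin (Real.pi / (n:ℝ))) * hpy

/-! ### sum helpers -/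

lemma ite_or2 {P Q : Prop} [Decidable P] [Decidable Q] (h : ¬(P ∧ Q)) (u : ℝ) :
    (if P ∨ Q then u else 0) = (if P then u else 0) + (if Q then u else 0) := by
  by_cases hP : P
  · by_cases hQ : Q
    · exact absurd ⟨hP, hQ⟩ h
    · simp [hP, hQ]
  · by_cases hQ : Q <;> simp [hP, hQ]

lemma ite_or3 {P Q R : Prop} [Decidable P] [Decidable Q] [Decidable R]
    (hpq : ¬(P ∧ Q)) (hpr : ¬(P ∧ R)) (hqr : ¬(Q ∧ R)) (u : ℝ) :
    (if P ∨ Q ∨ R then u else 0)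
      = (if P then u else 0) + ((if Q then u else 0) + (if R then u else 0)) := by
  rw [ite_or2 (fun h => h.2.elim (fun hq => hpq ⟨h.1, hq⟩) (fun hr => hpr ⟨h.1, hr⟩)),
    ite_or2 hqr]

section sums
variable {α β : Type*} [Fintype α] [Fintype β] [DecidableEq α] [DecidableEq β]

lemma sum_ite_eq_mul {γ : Type*} [Fintype γ] [DecidableEq γ] (a : γ) (u : ℝ) (f : γ → ℝ) :
    ∑ w, (if w = a then u else 0) * f w = u * f a := by
  rw [Finset.sum_eq_single a]
  · simp
  · intro b _ hb; simp [hb]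
  · intro h; exact absurd (Finset.mem_univ a) h

lemma sum_ite_pair (x' : α) (a : α × β) (u : ℝ) :
    ∑ y' : β, (if (x', y') = a then u else 0) = if x' = a.1 then u else 0 := by
  obtain ⟨a1, a2⟩ := a
  by_cases h : x' = a1
  · subst h
    simp [Prod.ext_iff, Finset.sum_ite_eq']
  · simp [Prod.ext_iff, h]

lemma sum_ite_pair' (y' : β) (a : α × β) (u : ℝ) :
    ∑ x' : α, (if (x', y') = a then u else 0) = if y' = a.2 then u else 0 := by
  obtain ⟨a1, a2⟩ := a
  by_cases h : y' = a2
  · subst h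
    simp [Prod.ext_iff, Finset.sum_ite_eq']
  · simp [Prod.ext_iff, h]

lemma sum_pair2 (x' : α) (a b : α × β) (hab : a ≠ b) (u : ℝ) :
    ∑ y', (if (x', y') = a ∨ (x', y') = b then u else 0)
      = (if x' = a.1 then u else 0) + (if x' = b.1 then u else 0) := by
  rw [Finset.sum_congr rfl fun y' _ => ite_or2 (fun h => hab (h.1.symm.trans h.2)) u,
    Finset.sum_add_distrib, sum_ite_pair, sum_ite_pair]

lemma sum_pair2' (y' : β) (a b : α × β) (hab : a ≠ b) (u : ℝ) :
    ∑ x', (if (x', y') = a ∨ (x', y') = b then u else 0)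
      = (if y' = a.2 then u else 0) + (if y' = b.2 then u else 0) := by
  rw [Finset.sum_congr rfl fun x' _ => ite_or2 (fun h => hab (h.1.symm.trans h.2)) u,
    Finset.sum_add_distrib, sum_ite_pair', sum_ite_pair']

lemma sum_pair3 (x' : α) (a b c : α × β) (hab : a ≠ b) (hac : a ≠ c) (hbc : b ≠ c) (u : ℝ) :
    ∑ y', (if (x', y') = a ∨ (x', y') = b ∨ (x', y') = c then u else 0)
      = (if x' = a.1 then u else 0) + ((if x' = b.1 then u else 0) + (if x' = c.1 then u else 0)) := by
  rw [Finset.sum_congr rfl fun y' _ => ite_or3 (fun h => hab (h.1.symm.trans h.2))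
    (fun h => hac (h.1.symm.trans h.2)) (fun h => hbc (h.1.symm.trans h.2)) u,
    Finset.sum_add_distrib, Finset.sum_add_distrib, sum_ite_pair, sum_ite_pair, sum_ite_pair]

lemma sum_pair3' (y' : β) (a b c : α × β) (hab : a ≠ b) (hac : a ≠ c) (hbc : b ≠ c) (u : ℝ) :
    ∑ x', (if (x', y') = a ∨ (x', y') = b ∨ (x', y') = c then u else 0)
      = (if y' = a.2 then u else 0) + ((if y' = b.2 then u else 0) + (if y' = c.2 then u else 0)) := by
  rw [Finset.sum_congr rfl fun x' _ => ite_or3 (fun h => hab (h.1.symm.trans h.2))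
    (fun h => hac (h.1.symm.trans h.2)) (fun h => hbc (h.1.symm.trans h.2)) u,
    Finset.sum_add_distrib, Finset.sum_add_distrib, sum_ite_pair', sum_ite_pair', sum_ite_pair']

lemma sum_w2 {γ : Type*} [Fintype γ] [DecidableEq γ] (a b : γ) (hab : a ≠ b) (u : ℝ) (f : γ → ℝ) :
    ∑ w, (if w = a ∨ w = b then u else 0) * f w = u * f a + u * f b := by
  rw [Finset.sum_congr rfl fun w _ =>
    congrArg (· * f w) (ite_or2 (fun h => hab (h.1.symm.trans h.2)) u)]
  simp only [add_mul]
  rw [Finset.sum_add_distrib, sum_ite_eq_mul, sum_ite_eq_mul]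

lemma sum_w3 {γ : Type*} [Fintype γ] [DecidableEq γ] (a b c : γ) (hab : a ≠ b) (hac : a ≠ c)
    (hbc : b ≠ c) (u : ℝ) (f : γ → ℝ) :
    ∑ w, (if w = a ∨ w = b ∨ w = c then u else 0) * f w = u * f a + (u * f b + u * f c) := by
  rw [Finset.sum_congr rfl fun w _ =>
    congrArg (· * f w) (ite_or3 (fun h => hab (h.1.symm.trans h.2))
      (fun h => hac (h.1.symm.trans h.2)) (fun h => hbc (h.1.symm.trans h.2)) u)]
  simp only [add_mul]
  rw [Finset.sum_add_distrib, Finset.sum_add_distrib, sum_ite_eq_mul, sum_ite_eq_mul,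
    sum_ite_eq_mul]

end sums

/-! ### the coupling kernel -/

noncomputable def Kpi (n : ℕ) : ZMod n × ZMod n → ZMod n × ZMod n → ℝ := fun z w =>
  if z.1 = z.2 then
    (if w = (z.1 + 1, z.1 + 1) ∨ w = (z.1 - 1, z.1 - 1) then 1/2 else 0)
  else if z.2 = z.1 + 1 then
    (if w = (z.1 - 1, z.2 + 1) ∨ w = (z.2, z.2) ∨ w = (z.1, z.1) then 1/2 else 0)
  else if z.1 = z.2 + 1 then
    (if w = (z.1 + 1, z.2 - 1) ∨ w = (z.2, z.2) ∨ w = (z.1, z.1) then 1/2 else 0)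
  else (if w = (z.1 + 1, z.2 - 1) ∨ w = (z.1 - 1, z.2 + 1) then 1/2 else 0)

noncomputable def rate (n : ℕ) : ZMod n × ZMod n → ℝ := fun z =>
  if z.1 ≠ z.2 ∧ (z.2 = z.1 + 1 ∨ z.1 = z.2 + 1) then 3/2 else 1

lemma kpi_nonneg (z w : ZMod n × ZMod n) : 0 ≤ Kpi n z w := by
  unfold Kpi
  split_ifs <;> norm_num

lemma kpi_eq_diag (x : ZMod n) (w : ZMod n × ZMod n) :
    Kpi n (x, x) w = (if w = (x + 1, x + 1) ∨ w = (x - 1, x - 1) then (1:ℝ)/2 else 0) := by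
  simp [Kpi]

lemma nbp_ne_xy (hn : 3 ≤ n) {x y : ZMod n} (hp : y = x + 1) : ¬ (x = y) := by
  rw [hp]; intro h; exact add_one_ne hn x h.symm

lemma kpi_eq_nbp (hn : 3 ≤ n) {x y : ZMod n} (hp : y = x + 1) (w : ZMod n × ZMod n) :
    Kpi n (x, y) w = (if w = (x - 1, y + 1) ∨ w = (y, y) ∨ w = (x, x) then (1:ℝ)/2 else 0) := by
  unfold Kpi
  dsimp only
  rw [if_neg (nbp_ne_xy hn hp), if_pos hp]

lemma nbm_ne_xy (hn : 3 ≤ n) {x y : ZMod n} (hm : x = y + 1) : ¬ (x = y) := by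
  rw [hm]; intro h; exact add_one_ne hn y h

lemma nbm_not_nbp (hn : 3 ≤ n) {x y : ZMod n} (hm : x = y + 1) : ¬ (y = x + 1) := by
  intro hp
  apply two_ne_zero' hn
  have : y = y + 1 + 1 := by rw [← hm]; exact hp
  linear_combination - this

lemma kpi_eq_nbm (hn : 3 ≤ n) {x y : ZMod n} (hm : x = y + 1) (w : ZMod n × ZMod n) :
    Kpi n (x, y) w = (if w = (x + 1, y - 1) ∨ w = (y, y) ∨ w = (x, x) then (1:ℝ)/2 else 0) := by
  unfold Kpi
  dsimp only
  rw [if_neg (nbm_ne_xy hn hm), if_neg (nbm_not_nbp hn hm), if_pos hm]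

lemma kpi_eq_far {x y : ZMod n} (h0 : ¬ x = y) (h1 : ¬ y = x + 1) (h2 : ¬ x = y + 1)
    (w : ZMod n × ZMod n) :
    Kpi n (x, y) w = (if w = (x + 1, y - 1) ∨ w = (x - 1, y + 1) then (1:ℝ)/2 else 0) := by
  unfold Kpi
  dsimp only
  rw [if_neg h0, if_neg h1, if_neg h2]

lemma rate_diag (x : ZMod n) : rate n (x, x) = 1 := by simp [rate]

lemma rate_nbp {x y : ZMod n} (hn : 3 ≤ n) (hp : y = x + 1) : rate n (x, y) = 3/2 := by
  unfold rate
  rw [if_pos ⟨nbp_ne_xy hn hp, Or.inl hp⟩]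

lemma rate_nbm {x y : ZMod n} (hn : 3 ≤ n) (hm : x = y + 1) : rate n (x, y) = 3/2 := by
  unfold rate
  rw [if_pos ⟨nbm_ne_xy hn hm, Or.inr hm⟩]

lemma rate_far {x y : ZMod n} (h0 : ¬ x = y) (h1 : ¬ y = x + 1) (h2 : ¬ x = y + 1) :
    rate n (x, y) = 1 := by
  unfold rate
  rw [if_neg (by tauto)]

lemma sum_w2' {γ : Type*} [Fintype γ] [DecidableEq γ] (a b : γ) (hab : a ≠ b) (u : ℝ) :
    ∑ w, (if w = a ∨ w = b then u else 0) = u + u := by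
  simpa using sum_w2 a b hab u (fun _ => 1)

lemma sum_w3' {γ : Type*} [Fintype γ] [DecidableEq γ] (a b c : γ) (hab : a ≠ b) (hac : a ≠ c)
    (hbc : b ≠ c) (u : ℝ) :
    ∑ w, (if w = a ∨ w = b ∨ w = c then u else 0) = u + (u + u) := by
  simpa using sum_w3 a b c hab hac hbc u (fun _ => 1)

/-! ### row sums of the coupling kernel -/

lemma kpi_row1 (hn : 3 ≤ n) (x y x' : ZMod n) (hx : ¬ x' = x) :
    ∑ y', Kpi n (x, y) (x', y') = (if x' = x + 1 ∨ x' = x - 1 then (1:ℝ)/2 else 0) := by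
  have excl : ¬ (x' = x + 1 ∧ x' = x - 1) := fun h => add_one_ne_sub_one hn x (h.1.symm.trans h.2)
  have eA : ¬ (x + 1 = x - 1) := add_one_ne_sub_one hn x
  have eB : ¬ (x - 1 = x + 1) := fun h => eA h.symm
  by_cases hzz : x = y
  · subst hzz
    rw [Finset.sum_congr rfl fun y' _ => kpi_eq_diag x (x', y'),
      sum_pair2 x' (x + 1, x + 1) (x - 1, x - 1)
        (fun h => add_one_ne_sub_one hn x (congrArg Prod.fst h)) (1/2)]
    exact (ite_or2 excl _).symm
  · by_cases hp : y = x + 1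
    · rw [Finset.sum_congr rfl fun y' _ => kpi_eq_nbp hn hp (x', y'),
        sum_pair3 x' (x - 1, y + 1) (y, y) (x, x)
          (fun h => add_one_ne hn y (congrArg Prod.snd h))
          (fun h => sub_one_ne hn x (congrArg Prod.fst h))
          (fun h => hzz (congrArg Prod.fst h).symm) (1/2)]
      dsimp only
      rw [if_neg hx]
      subst hp
      by_cases h1 : x' = x + 1 <;> by_cases h2 : x' = x - 1
      · exact absurd (h1.symm.trans h2) (add_one_ne_sub_one hn x)
      · simp [h1, h2, eA, eB]
      · simp [h1, h2, eA, eB]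
      · simp [h1, h2, eA, eB]
    · by_cases hm : x = y + 1
      · rw [Finset.sum_congr rfl fun y' _ => kpi_eq_nbm hn hm (x', y'),
          sum_pair3 x' (x + 1, y - 1) (y, y) (x, x)
            (fun h => sub_one_ne hn y (congrArg Prod.snd h))
            (fun h => add_one_ne hn x (congrArg Prod.fst h))
            (fun h => hzz (congrArg Prod.fst h).symm) (1/2)]
        dsimp only
        rw [if_neg hx]
        have hy : y = x - 1 := by rw [hm]; ring
        subst hy
        by_cases h1 : x' = x + 1 <;> by_cases h2 : x' = x - 1
        · exact absurd (h1.symm.trans h2) (add_one_ne_sub_one hn x)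
        · simp [h1, h2, eA, eB]
        · simp [h1, h2, eA, eB]
        · simp [h1, h2, eA, eB]
      · rw [Finset.sum_congr rfl fun y' _ => kpi_eq_far hzz hp hm (x', y'),
          sum_pair2 x' (x + 1, y - 1) (x - 1, y + 1)
            (fun h => add_one_ne_sub_one hn x (congrArg Prod.fst h)) (1/2)]
        exact (ite_or2 excl _).symm

lemma kpi_row2 (hn : 3 ≤ n) (x y y' : ZMod n) (hy : ¬ y' = y) :
    ∑ x', Kpi n (x, y) (x', y') = (if y' = y + 1 ∨ y' = y - 1 then (1:ℝ)/2 else 0) := by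
  have excl : ¬ (y' = y + 1 ∧ y' = y - 1) := fun h => add_one_ne_sub_one hn y (h.1.symm.trans h.2)
  have eA : ¬ (y + 1 = y - 1) := add_one_ne_sub_one hn y
  have eB : ¬ (y - 1 = y + 1) := fun h => eA h.symm
  by_cases hzz : x = y
  · subst hzz
    rw [Finset.sum_congr rfl fun x' _ => kpi_eq_diag x (x', y'),
      sum_pair2' y' (x + 1, x + 1) (x - 1, x - 1)
        (fun h => add_one_ne_sub_one hn x (congrArg Prod.fst h)) (1/2)]
    exact (ite_or2 excl _).symm
  · by_cases hp : y = x + 1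
    · rw [Finset.sum_congr rfl fun x' _ => kpi_eq_nbp hn hp (x', y'),
        sum_pair3' y' (x - 1, y + 1) (y, y) (x, x)
          (fun h => add_one_ne hn y (congrArg Prod.snd h))
          (fun h => sub_one_ne hn x (congrArg Prod.fst h))
          (fun h => hzz (congrArg Prod.fst h).symm) (1/2)]
      dsimp only
      rw [if_neg hy]
      have hx : x = y - 1 := by rw [hp]; ring
      rw [hx]
      by_cases h1 : y' = y + 1 <;> by_cases h2 : y' = y - 1
      · exact absurd (h1.symm.trans h2) (add_one_ne_sub_one hn y)
      · simp [h1, h2, eA, eB]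
      · simp [h1, h2, eA, eB]
      · simp [h1, h2, eA, eB]
    · by_cases hm : x = y + 1
      · rw [Finset.sum_congr rfl fun x' _ => kpi_eq_nbm hn hm (x', y'),
          sum_pair3' y' (x + 1, y - 1) (y, y) (x, x)
            (fun h => sub_one_ne hn y (congrArg Prod.snd h))
            (fun h => add_one_ne hn x (congrArg Prod.fst h))
            (fun h => hzz (congrArg Prod.fst h).symm) (1/2)]
        dsimp only
        rw [if_neg hy, hm]
        by_cases h1 : y' = y + 1 <;> by_cases h2 : y' = y - 1
        · exact absurd (h1.symm.trans h2) (add_one_ne_sub_one hn y)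
        · simp [h1, h2, eA, eB]
        · simp [h1, h2, eA, eB]
        · simp [h1, h2, eA, eB]
      · rw [Finset.sum_congr rfl fun x' _ => kpi_eq_far hzz hp hm (x', y'),
          sum_pair2' y' (x + 1, y - 1) (x - 1, y + 1)
            (fun h => sub_one_ne_add_one hn y (congrArg Prod.snd h)) (1/2)]
        dsimp only
        by_cases h1 : y' = y + 1 <;> by_cases h2 : y' = y - 1
        · exact absurd (h1.symm.trans h2) (add_one_ne_sub_one hn y)
        · simp [h1, h2, eA, eB]
        · simp [h1, h2, eA, eB]
        · simp [h1, h2, eA, eB]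

lemma kpi_row1_diag (hn : 3 ≤ n) (x y : ZMod n) :
    ∑ y', Kpi n (x, y) (x, y') = rate n (x, y) - 1 := by
  have eA : ¬ (x = x + 1) := fun h => add_one_ne hn x h.symm
  have eB : ¬ (x = x - 1) := fun h => sub_one_ne hn x h.symm
  by_cases hzz : x = y
  · subst hzz
    rw [Finset.sum_congr rfl fun y' _ => kpi_eq_diag x (x, y'),
      sum_pair2 x (x + 1, x + 1) (x - 1, x - 1)
        (fun h => add_one_ne_sub_one hn x (congrArg Prod.fst h)) (1/2), rate_diag]
    dsimp only
    rw [if_neg eA, if_neg eB]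
    norm_num
  · by_cases hp : y = x + 1
    · rw [Finset.sum_congr rfl fun y' _ => kpi_eq_nbp hn hp (x, y'),
        sum_pair3 x (x - 1, y + 1) (y, y) (x, x)
          (fun h => add_one_ne hn y (congrArg Prod.snd h))
          (fun h => sub_one_ne hn x (congrArg Prod.fst h))
          (fun h => hzz (congrArg Prod.fst h).symm) (1/2), rate_nbp hn hp]
      dsimp only
      rw [if_neg eB, if_neg (fun h => hzz h), if_pos rfl]
      norm_num
    · by_cases hm : x = y + 1
      · rw [Finset.sum_congr rfl fun y' _ => kpi_eq_nbm hn hm (x, y'),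
          sum_pair3 x (x + 1, y - 1) (y, y) (x, x)
            (fun h => sub_one_ne hn y (congrArg Prod.snd h))
            (fun h => add_one_ne hn x (congrArg Prod.fst h))
            (fun h => hzz (congrArg Prod.fst h).symm) (1/2), rate_nbm hn hm]
        dsimp only
        rw [if_neg eA, if_neg (fun h => hzz h), if_pos rfl]
        norm_num
      · rw [Finset.sum_congr rfl fun y' _ => kpi_eq_far hzz hp hm (x, y'),
          sum_pair2 x (x + 1, y - 1) (x - 1, y + 1)
            (fun h => add_one_ne_sub_one hn x (congrArg Prod.fst h)) (1/2),
          rate_far hzz hp hm]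
        dsimp only
        rw [if_neg eA, if_neg eB]
        norm_num

lemma kpi_row2_diag (hn : 3 ≤ n) (x y : ZMod n) :
    ∑ x', Kpi n (x, y) (x', y) = rate n (x, y) - 1 := by
  have eA : ¬ (y = y + 1) := fun h => add_one_ne hn y h.symm
  have eB : ¬ (y = y - 1) := fun h => sub_one_ne hn y h.symm
  by_cases hzz : x = y
  · subst hzz
    rw [Finset.sum_congr rfl fun x' _ => kpi_eq_diag x (x', x),
      sum_pair2' x (x + 1, x + 1) (x - 1, x - 1)
        (fun h => add_one_ne_sub_one hn x (congrArg Prod.fst h)) (1/2), rate_diag]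
    dsimp only
    rw [if_neg (fun h : x = x + 1 => add_one_ne hn x h.symm),
      if_neg (fun h : x = x - 1 => sub_one_ne hn x h.symm)]
    norm_num
  · by_cases hp : y = x + 1
    · rw [Finset.sum_congr rfl fun x' _ => kpi_eq_nbp hn hp (x', y),
        sum_pair3' y (x - 1, y + 1) (y, y) (x, x)
          (fun h => add_one_ne hn y (congrArg Prod.snd h))
          (fun h => sub_one_ne hn x (congrArg Prod.fst h))
          (fun h => hzz (congrArg Prod.fst h).symm) (1/2), rate_nbp hn hp]
      dsimp only
      rw [if_neg eA, if_pos rfl, if_neg (fun h => hzz h.symm)]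
      norm_num
    · by_cases hm : x = y + 1
      · rw [Finset.sum_congr rfl fun x' _ => kpi_eq_nbm hn hm (x', y),
          sum_pair3' y (x + 1, y - 1) (y, y) (x, x)
            (fun h => sub_one_ne hn y (congrArg Prod.snd h))
            (fun h => add_one_ne hn x (congrArg Prod.fst h))
            (fun h => hzz (congrArg Prod.fst h).symm) (1/2), rate_nbm hn hm]
        dsimp only
        rw [if_neg eB, if_pos rfl, if_neg (fun h => hzz h.symm)]
        norm_num
      · rw [Finset.sum_congr rfl fun x' _ => kpi_eq_far hzz hp hm (x', y),
          sum_pair2' y (x + 1, y - 1) (x - 1, y + 1)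
            (fun h => sub_one_ne_add_one hn y (congrArg Prod.snd h)) (1/2),
          rate_far hzz hp hm]
        dsimp only
        rw [if_neg eB, if_neg eA]
        norm_num

lemma kpi_total (hn : 3 ≤ n) (z : ZMod n × ZMod n) : ∑ w, Kpi n z w = rate n z := by
  obtain ⟨x, y⟩ := z
  by_cases hzz : x = y
  · subst hzz
    rw [Finset.sum_congr rfl fun w _ => kpi_eq_diag x w,
      sum_w2' (x + 1, x + 1) (x - 1, x - 1)
        (fun h => add_one_ne_sub_one hn x (congrArg Prod.fst h)) (1/2), rate_diag]
    norm_num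
  · by_cases hp : y = x + 1
    · rw [Finset.sum_congr rfl fun w _ => kpi_eq_nbp hn hp w,
        sum_w3' (x - 1, y + 1) (y, y) (x, x)
          (fun h => add_one_ne hn y (congrArg Prod.snd h))
          (fun h => sub_one_ne hn x (congrArg Prod.fst h))
          (fun h => hzz (congrArg Prod.fst h).symm) (1/2), rate_nbp hn hp]
      norm_num
    · by_cases hm : x = y + 1
      · rw [Finset.sum_congr rfl fun w _ => kpi_eq_nbm hn hm w,
          sum_w3' (x + 1, y - 1) (y, y) (x, x)
            (fun h => sub_one_ne hn y (congrArg Prod.snd h))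
            (fun h => add_one_ne hn x (congrArg Prod.fst h))
            (fun h => hzz (congrArg Prod.fst h).symm) (1/2), rate_nbm hn hm]
        norm_num
      · rw [Finset.sum_congr rfl fun w _ => kpi_eq_far hzz hp hm w,
          sum_w2' (x + 1, y - 1) (x - 1, y + 1)
            (fun h => add_one_ne_sub_one hn x (congrArg Prod.fst h)) (1/2),
          rate_far hzz hp hm]
        norm_num

/-! ### the master pointwise contraction inequality -/

lemma master (hn : 3 ≤ n) (z : ZMod n × ZMod n) :
    ∑ w, Kpi n z w * gf n (w.1 - w.2)
      ≤ (rate n z - (1 - Real.cos (2 * Real.pi / n))) * gf n (z.1 - z.2) := by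
  obtain ⟨x, y⟩ := z
  by_cases hzz : x = y
  · subst hzz
    rw [Finset.sum_congr rfl fun w _ =>
        congrArg (· * gf n (w.1 - w.2)) (kpi_eq_diag x w),
      sum_w2 (x + 1, x + 1) (x - 1, x - 1)
        (fun h => add_one_ne_sub_one hn x (congrArg Prod.fst h)) (1/2) _, rate_diag]
    dsimp only
    simp [sub_self, gf_zero]
  · by_cases hp : y = x + 1
    · rw [Finset.sum_congr rfl fun w _ =>
          congrArg (· * gf n (w.1 - w.2)) (kpi_eq_nbp hn hp w),
        sum_w3 (x - 1, y + 1) (y, y) (x, x)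
          (fun h => add_one_ne hn y (congrArg Prod.snd h))
          (fun h => sub_one_ne hn x (congrArg Prod.fst h))
          (fun h => hzz (congrArg Prod.fst h).symm) (1/2) _, rate_nbp hn hp]
      dsimp only
      have hd3 : x - 1 - (y + 1) = -(3 : ZMod n) := by rw [hp]; ring
      have hd1 : x - y = -(1 : ZMod n) := by rw [hp]; ring
      rw [hd3, hd1]
      simp only [sub_self, gf_zero]
      rw [gf_neg hn 3, gf_neg hn 1, gf_three hn, gf_one hn]
      have := nb_real hn
      linarith
    · by_cases hm : x = y + 1
      · rw [Finset.sum_congr rfl fun w _ =>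
            congrArg (· * gf n (w.1 - w.2)) (kpi_eq_nbm hn hm w),
          sum_w3 (x + 1, y - 1) (y, y) (x, x)
            (fun h => sub_one_ne hn y (congrArg Prod.snd h))
            (fun h => add_one_ne hn x (congrArg Prod.fst h))
            (fun h => hzz (congrArg Prod.fst h).symm) (1/2) _, rate_nbm hn hm]
        dsimp only
        have hd3 : x + 1 - (y - 1) = (3 : ZMod n) := by rw [hm]; ring
        have hd1 : x - y = (1 : ZMod n) := by rw [hm]; ring
        rw [hd3, hd1]
        simp only [sub_self, gf_zero]
        rw [gf_three hn, gf_one hn]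
        have := nb_real hn
        linarith
      · rw [Finset.sum_congr rfl fun w _ =>
            congrArg (· * gf n (w.1 - w.2)) (kpi_eq_far hzz hp hm w),
          sum_w2 (x + 1, y - 1) (x - 1, y + 1)
            (fun h => add_one_ne_sub_one hn x (congrArg Prod.fst h)) (1/2) _,
          rate_far hzz hp hm]
        dsimp only
        have ha : x + 1 - (y - 1) = (x - y) + 2 := by ring
        have hb : x - 1 - (y + 1) = (x - y) - 2 := by ring
        have h0' : x - y ≠ 0 := sub_ne_zero.mpr hzz
        have h1' : x - y ≠ 1 := fun h => hm (by linear_combination h)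
        have h2' : x - y ≠ -1 := fun h => hp (by linear_combination -h)
        have hfar := gf_far hn h0' h1' h2'
        rw [ha, hb]
        linarith

/-! ### generator matrix and marginal identities -/

noncomputable def Dmat (n : ℕ) : Matrix (ZMod n) (ZMod n) ℝ := fun x y =>
  if y = x + 1 ∨ y = x - 1 then 1 / 2 else if y = x then -1 else 0

noncomputable def Lgen (n : ℕ) : Matrix (ZMod n × ZMod n) (ZMod n × ZMod n) ℝ :=
  fun z w => Kpi n z w - if w = z then rate n z else 0

noncomputable def A1 (n : ℕ) : Matrix (ZMod n × ZMod n) (ZMod n) ℝ :=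
  fun z u => if z.1 = u then 1 else 0

noncomputable def A2 (n : ℕ) : Matrix (ZMod n × ZMod n) (ZMod n) ℝ :=
  fun z u => if z.2 = u then 1 else 0

lemma mulA1_entry (M : Matrix (ZMod n × ZMod n) (ZMod n × ZMod n) ℝ)
    (z : ZMod n × ZMod n) (x' : ZMod n) :
    (M * A1 n) z x' = ∑ y', M z (x', y') := by
  have h1 : ∀ w1, (∑ w2, M z (w1, w2) * A1 n (w1, w2) x')
      = if w1 = x' then ∑ w2, M z (w1, w2) else 0 := by
    intro w1; by_cases h : w1 = x' <;> simp [A1, h]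
  rw [Matrix.mul_apply, Fintype.sum_prod_type, Finset.sum_congr rfl fun w1 _ => h1 w1,
    Finset.sum_ite_eq' Finset.univ x' (fun w1 => ∑ w2, M z (w1, w2))]
  simp

lemma mulA2_entry (M : Matrix (ZMod n × ZMod n) (ZMod n × ZMod n) ℝ)
    (z : ZMod n × ZMod n) (y' : ZMod n) :
    (M * A2 n) z y' = ∑ x', M z (x', y') := by
  have h1 : ∀ w1, (∑ w2, M z (w1, w2) * A2 n (w1, w2) y') = M z (w1, y') := by
    intro w1; simp [A2, mul_ite, Finset.sum_ite_eq']
  rw [Matrix.mul_apply, Fintype.sum_prod_type, Finset.sum_congr rfl fun w1 _ => h1 w1]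

lemma A1mul_entry (N : Matrix (ZMod n) (ZMod n) ℝ) (z : ZMod n × ZMod n) (x' : ZMod n) :
    (A1 n * N) z x' = N z.1 x' := by
  rw [Matrix.mul_apply]
  simp [A1, ite_mul, Finset.sum_ite_eq]

lemma A2mul_entry (N : Matrix (ZMod n) (ZMod n) ℝ) (z : ZMod n × ZMod n) (y' : ZMod n) :
    (A2 n * N) z y' = N z.2 y' := by
  rw [Matrix.mul_apply]
  simp [A2, ite_mul, Finset.sum_ite_eq]

lemma dmat_ne {a x' : ZMod n} (hn : 3 ≤ n) (hx : ¬ x' = a) :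
    Dmat n a x' = (if x' = a + 1 ∨ x' = a - 1 then (1:ℝ)/2 else 0) := by
  unfold Dmat
  by_cases hor : x' = a + 1 ∨ x' = a - 1
  · rw [if_pos hor, if_pos hor]
  · rw [if_neg hor, if_neg hor, if_neg hx]

lemma dmat_eq (hn : 3 ≤ n) (a : ZMod n) : Dmat n a a = -1 := by
  unfold Dmat
  rw [if_neg, if_pos rfl]
  exact fun h => h.elim (fun h1 => add_one_ne hn a h1.symm) (fun h2 => sub_one_ne hn a h2.symm)

lemma LA1 (hn : 3 ≤ n) : Lgen n * A1 n = A1 n * Dmat n := by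
  ext z x'
  obtain ⟨a, b⟩ := z
  rw [mulA1_entry, A1mul_entry]
  simp only [Lgen]
  rw [Finset.sum_sub_distrib, sum_ite_pair x' (a, b) (rate n (a, b))]
  by_cases hx : x' = a
  · subst hx
    rw [if_pos rfl, kpi_row1_diag hn x' b, dmat_eq hn]
    ring
  · rw [if_neg hx, sub_zero, kpi_row1 hn a b x' hx, dmat_ne hn hx]

lemma LA2 (hn : 3 ≤ n) : Lgen n * A2 n = A2 n * Dmat n := by
  ext z y'
  obtain ⟨a, b⟩ := z
  rw [mulA2_entry, A2mul_entry]
  simp only [Lgen]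
  rw [Finset.sum_sub_distrib, sum_ite_pair' y' (a, b) (rate n (a, b))]
  by_cases hy : y' = b
  · subst hy
    rw [if_pos rfl, kpi_row2_diag hn a y', dmat_eq hn]
    ring
  · rw [if_neg hy, sub_zero, kpi_row2 hn a b y' hy, dmat_ne hn hy]

lemma mulVec_eq_sum (M : Matrix (ZMod n × ZMod n) (ZMod n × ZMod n) ℝ)
    (v : ZMod n × ZMod n → ℝ) (z : ZMod n × ZMod n) :
    M.mulVec v z = ∑ w, M z w * v w := rfl

/-! ### the coupled semigroup -/

lemma main2 (hn : 3 ≤ n) (t : ℝ) (ht : 0 ≤ t) (x y : ZMod n) :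
    ∃ π : ZMod n × ZMod n → ℝ,
      (∀ z, 0 ≤ π z) ∧
      (∀ x' : ZMod n, ∑ y', π (x', y') = exp (t • Dmat n) x x') ∧
      (∀ y' : ZMod n, ∑ x', π (x', y') = exp (t • Dmat n) y y') ∧
      ∑ z : ZMod n × ZMod n, gf n (z.1 - z.2) * π z
        ≤ Real.exp (-(1 - Real.cos (2 * Real.pi / n)) * t) * gf n (x - y) := by
  classical
  set κ0 : ℝ := 1 - Real.cos (2 * Real.pi / n) with hκ0
  have hoff : ∀ z w : ZMod n × ZMod n, z ≠ w → 0 ≤ Lgen n z w := by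
    intro z w hzw
    simp only [Lgen]
    rw [if_neg (fun h => hzw h.symm), sub_zero]
    exact kpi_nonneg z w
  refine ⟨fun w => exp (t • Lgen n) (x, y) w, ?_, ?_, ?_, ?_⟩
  · intro z; exact exp_offdiag_nonneg hoff ht (x, y) z
  · intro x'
    have h := congrFun (congrFun (exp_intertwine (Lgen n) (Dmat n) (A1 n) (LA1 hn) t) (x, y)) x'
    rw [mulA1_entry, A1mul_entry] at h
    exact h
  · intro y'
    have h := congrFun (congrFun (exp_intertwine (Lgen n) (Dmat n) (A2 n) (LA2 hn) t) (x, y)) y'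
    rw [mulA2_entry, A2mul_entry] at h
    exact h
  · set V : ZMod n × ZMod n → ℝ := fun w => gf n (w.1 - w.2) with hV
    set B : Matrix (ZMod n × ZMod n) (ZMod n × ZMod n) ℝ := Lgen n + κ0 • 1 with hB
    have hBoff : ∀ z w, z ≠ w → 0 ≤ B z w := by
      intro z w hzw
      rw [hB]
      simp only [Matrix.add_apply, Matrix.smul_apply, Matrix.one_apply_ne hzw, smul_eq_mul,
        mul_zero, add_zero]
      exact hoff z w hzw
    have hVw : ∀ w : ZMod n × ZMod n, V w = gf n (w.1 - w.2) := fun _ => rfl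
    have hBV : ∀ z, B.mulVec V z ≤ 0 := by
      intro z
      have key : ∀ w, B z w * V w
          = Kpi n z w * gf n (w.1 - w.2)
            - ((if w = z then rate n z else 0) * gf n (w.1 - w.2)
              - (if w = z then κ0 else 0) * gf n (w.1 - w.2)) := by
        intro w
        rw [hVw]
        by_cases h : w = z
        · subst h
          have hBe : B w w = Kpi n w w - rate n w + κ0 := by
            rw [hB]
            simp [Lgen, Matrix.add_apply, Matrix.smul_apply, Matrix.one_apply_eq]
          rw [hBe, if_pos rfl, if_pos rfl]
          ring
        · have h' : ¬ z = w := fun hh => h hh.symm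
          have hBe : B z w = Kpi n z w := by
            rw [hB]
            simp [Lgen, Matrix.add_apply, Matrix.smul_apply, Matrix.one_apply_ne h', if_neg h]
          rw [hBe, if_neg h, if_neg h]
          ring
      rw [mulVec_eq_sum, Finset.sum_congr rfl fun w _ => key w, Finset.sum_sub_distrib,
        Finset.sum_sub_distrib, sum_ite_eq_mul z (rate n z) _, sum_ite_eq_mul z κ0 _]
      have hM := master hn z
      rw [← hκ0] at hM
      linarith [hM]
    have hLB : t • Lgen n = t • B + (-(t * κ0)) • (1 : Matrix (ZMod n × ZMod n) (ZMod n × ZMod n) ℝ) := by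
      rw [hB, smul_add, smul_smul]
      module
    have hexp : exp (t • Lgen n) = Real.exp (-(t * κ0)) • exp (t • B) := by
      erw [hLB, exp_add_of_commute ((Commute.one_right (t • B)).smul_right (-(t * κ0))),
        exp_smul_one, mul_smul_comm, mul_one]
      rfl
    have hle := exp_mulVec_le B hBoff V hBV ht (x, y)
    calc ∑ z : ZMod n × ZMod n, gf n (z.1 - z.2) * exp (t • Lgen n) (x, y) z
        = (exp (t • Lgen n)).mulVec V (x, y) := by
          rw [mulVec_eq_sum]
          exact Finset.sum_congr rfl fun w _ => mul_comm _ _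
      _ = Real.exp (-(t * κ0)) * ((exp (t • B)).mulVec V (x, y)) := by
          rw [hexp, Matrix.smul_mulVec]
          simp
      _ ≤ Real.exp (-(t * κ0)) * V (x, y) :=
          mul_le_mul_of_nonneg_left hle (Real.exp_nonneg _)
      _ = Real.exp (-κ0 * t) * gf n (x - y) := by
          rw [show -(t * κ0) = -κ0 * t by ring]

end Aux13

/-- On the discrete circle `ℤ/nℤ` (`n ≥ 3`) with Laplacian
`Δf(x) = ½(f(x+1) + f(x-1)) - f(x)`, graph metric `d_G`, and the modified metric
`d(x,y) = sin (d_G(x,y) π / n)`: there is a coupling generator `Δ^π` with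
`Δ^π d ≤ -(1 - cos (2π/n)) d`, and consequently
`W₁(P_t(x,·),P_t(y,·)) ≤ e^{-(1 - cos(2π/n)) t} d(x,y)`, the sharp rate
`λ₁ = 1 - cos (2π/n)`. -/
theorem stmt13 (n : ℕ) [NeZero n] (hn : 3 ≤ n) :
    let Δ : Matrix (ZMod n) (ZMod n) ℝ := fun x y =>
      if y = x + 1 ∨ y = x - 1 then 1 / 2 else if y = x then -1 else 0
    let J : ZMod n → ZMod n → ℝ := fun x y => if y = x + 1 ∨ y = x - 1 then 1 / 2 else 0
    let d : ZMod n → ZMod n → ℝ := fun x y =>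
      Real.sin ((min (x - y).val (y - x).val : ℕ) * Real.pi / n)
    let κ : ℝ := 1 - Real.cos (2 * Real.pi / n)
    (∃ Jπ : (ZMod n × ZMod n) → (ZMod n × ZMod n) → ℝ, IsCouplingKernel J Jπ ∧
      ∀ x y : ZMod n, x ≠ y →
        ∑' w : ZMod n × ZMod n, Jπ (x, y) w * (d w.1 w.2 - d x y) ≤ -κ * d x y) ∧
    ∀ t : ℝ, 0 ≤ t → ∀ x y : ZMod n,
      Tcost d (NormedSpace.exp (t • Δ) x) (NormedSpace.exp (t • Δ) y) ≤
        Real.exp (-κ * t) * d x y := by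
  intro Δ J d κ
  have hd : ∀ a b : ZMod n, d a b = Aux13.gf n (a - b) := fun a b => Aux13.d_eq_gf hn a b
  constructor
  · refine ⟨Aux13.Kpi n, ⟨fun z w => Aux13.kpi_nonneg z w, ?_, ?_, ?_⟩, ?_⟩
    · intro x y x' hx
      rw [tsum_fintype]
      exact Aux13.kpi_row1 hn x y x' hx
    · intro x y y' hy
      rw [tsum_fintype]
      exact Aux13.kpi_row2 hn x y y' hy
    · intro x w hw
      rw [Aux13.kpi_eq_diag x w, if_neg]
      rintro (h | h) <;> (rw [h] at hw; exact hw rfl)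
    · intro x y hxy
      rw [tsum_fintype]
      have expand : ∀ w : ZMod n × ZMod n, Aux13.Kpi n (x, y) w * (d w.1 w.2 - d x y)
          = Aux13.Kpi n (x, y) w * Aux13.gf n (w.1 - w.2)
            - Aux13.Kpi n (x, y) w * Aux13.gf n (x - y) := by
        intro w; rw [hd, hd]; ring
      rw [Finset.sum_congr rfl fun w _ => expand w, Finset.sum_sub_distrib, ← Finset.sum_mul,
        Aux13.kpi_total hn, hd]
      have hm := Aux13.master hn (x, y)
      dsimp only at hm
      show _ ≤ -(1 - Real.cos (2 * Real.pi / n)) * Aux13.gf n (x - y)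
      linarith [hm]
  · intro t ht x y
    obtain ⟨π, hpos, hm1, hm2, hcost⟩ := Aux13.main2 hn t ht x y
    have hd0 : ∀ a b : ZMod n, 0 ≤ d a b := by
      intro a b; rw [hd]; exact Aux13.gf_nonneg hn _
    unfold Tcost
    have hbdd : BddBelow {r : ℝ | ∃ π', IsCoupling (NormedSpace.exp (t • Δ) x)
        (NormedSpace.exp (t • Δ) y) π' ∧ r = ∑' z : ZMod n × ZMod n, d z.1 z.2 * π' z} := by
      refine ⟨0, fun r hr => ?_⟩
      obtain ⟨π', ⟨hp0, _, _, _⟩, hr⟩ := hr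
      rw [hr]
      exact tsum_nonneg fun z => mul_nonneg (hd0 _ _) (hp0 z)
    have hmem : (∑' z : ZMod n × ZMod n, d z.1 z.2 * π z) ∈ {r : ℝ | ∃ π', IsCoupling
        (NormedSpace.exp (t • Δ) x) (NormedSpace.exp (t • Δ) y) π' ∧
        r = ∑' z : ZMod n × ZMod n, d z.1 z.2 * π' z} := by
      refine ⟨π, ⟨hpos, Summable.of_finite, ?_, ?_⟩, rfl⟩
      · intro x'
        rw [tsum_fintype]
        exact hm1 x'
      · intro y'
        rw [tsum_fintype]
        exact hm2 y'
    refine le_trans (csInf_le hbdd hmem) ?_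
    rw [tsum_fintype]
    have hdz : ∀ z : ZMod n × ZMod n, d z.1 z.2 * π z = Aux13.gf n (z.1 - z.2) * π z := by
      intro z; rw [hd]
    rw [Finset.sum_congr rfl fun z _ => hdz z, hd]
    show _ ≤ Real.exp (-(1 - Real.cos (2 * Real.pi / n)) * t) * Aux13.gf n (x - y)
    exact hcost
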